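/- Suppose P : X → ℝ is Gateaux differentiable with derivative A, i.e., for all v, w ∈ X the function t ↦ P(w + t·v) is differentiable at t = 0 with derivative ⟪A w, v⟫, and define the energy functional E(v) := P(v) − ⟪f, v⟫. Then for every closed subspace X_H ⊆ X, the Galerkin solution u_H⋆ is the unique minimizer of E over X_H: E(u_H⋆) ≤ E(v_H) for all v_H ∈ X_H, with equality if and only if v_H = u_H⋆. -/

import Mathlib

open RealInnerProductSpace

/-- Energy minimization: if `P : X → ℝ` is Gateaux differentiable with derivative `A`
(i.e. `t ↦ P(w + t v)` has derivative `⟪A w, v⟫` at `t = 0`) and `E(v) := P(v) − ⟪f, v⟫`,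
then the Galerkin solution `uH` on a closed subspace `K` is the unique minimizer of `E`
over `K`: `E(uH) ≤ E(vH)` for all `vH ∈ K`, with equality iff `vH = uH`. -/
theorem stmt_5 {X : Type*} [NormedAddCommGroup X] [InnerProductSpace ℝ X] [CompleteSpace X]
    (A : X → X) (f : X) (α L : ℝ) (hα : 0 < α) (hαL : α ≤ L)
    (hmono : ∀ v w : X, α * ‖w - v‖ ^ 2 ≤ ⟪A w - A v, w - v⟫)
    (hlip : ∀ v w : X, ‖A w - A v‖ ≤ L * ‖w - v‖)
    (P : X → ℝ)
    (hP : ∀ w v : X, HasDerivAt (fun t : ℝ => P (w + t • v)) (⟪A w, v⟫) 0)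
    (E : X → ℝ) (hE : ∀ v : X, E v = P v - ⟪f, v⟫)
    (K : Submodule ℝ X) (hK : IsClosed (K : Set X))
    (uH : X) (huHmem : uH ∈ K) (huH : ∀ v ∈ K, ⟪A uH, v⟫ = ⟪f, v⟫) :
    ∀ vH ∈ K, E uH ≤ E vH ∧ (E vH = E uH ↔ vH = uH) := by
  intro vH hvH
  set e : X := vH - uH with he
  have heK : e ∈ K := K.sub_mem hvH huHmem
  have hfe : ⟪A uH, e⟫ = ⟪f, e⟫ := huH e heK
  -- derivative of t ↦ E (uH + t • e) at any s
  have hD : ∀ s : ℝ, HasDerivAt (fun t : ℝ => E (uH + t • e))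
      (⟪A (uH + s • e), e⟫ - ⟪f, e⟫) s := by
    intro s
    have h1 : HasDerivAt (fun t : ℝ => P (uH + s • e + t • e)) (⟪A (uH + s • e), e⟫) 0 :=
      hP (uH + s • e) e
    have hshift : HasDerivAt (fun t : ℝ => t - s) 1 s := (hasDerivAt_id s).sub_const s
    have h2 : HasDerivAt (fun t : ℝ => P (uH + s • e + (t - s) • e))
        (⟪A (uH + s • e), e⟫ * 1) s := by
      have := HasDerivAt.comp s (by simpa using h1) hshift
      simpa [Function.comp_def] using this
    have h3 : HasDerivAt (fun t : ℝ => P (uH + t • e)) (⟪A (uH + s • e), e⟫) s := by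
      have heq : (fun t : ℝ => P (uH + s • e + (t - s) • e)) = fun t : ℝ => P (uH + t • e) := by
        funext t
        congr 1
        rw [sub_smul]
        abel
      rw [heq, mul_one] at h2
      exact h2
    have h4 : HasDerivAt (fun t : ℝ => ⟪f, uH + t • e⟫) (⟪f, e⟫) s := by
      have : (fun t : ℝ => ⟪f, uH + t • e⟫) = fun t : ℝ => ⟪f, uH⟫ + t * ⟪f, e⟫ := by
        funext t
        rw [inner_add_right, real_inner_smul_right]
      rw [this]
      simpa using ((hasDerivAt_id s).mul_const (⟪f, e⟫)).const_add (⟪f, uH⟫)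
    have := h3.sub h4
    simpa [hE, Pi.sub_def] using this
  -- φ t = E (uH + t • e) - α/2 * t^2 * ‖e‖^2 is monotone on [0,1]
  set φ : ℝ → ℝ := fun t => E (uH + t • e) - α / 2 * t ^ 2 * ‖e‖ ^ 2 with hφ
  have hφD : ∀ s : ℝ, HasDerivAt φ
      (⟪A (uH + s • e), e⟫ - ⟪f, e⟫ - α * s * ‖e‖ ^ 2) s := by
    intro s
    have h5 : HasDerivAt (fun t : ℝ => α / 2 * t ^ 2 * ‖e‖ ^ 2) (α * s * ‖e‖ ^ 2) s := by
      have := ((hasDerivAt_pow 2 s).const_mul (α / 2)).mul_const (‖e‖ ^ 2)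
      exact this.congr_deriv (by rw [show (2:ℕ) - 1 = 1 from rfl]; ring)
    exact (hD s).sub h5
  have hmonoφ : MonotoneOn φ (Set.Icc 0 1) := by
    apply monotoneOn_of_deriv_nonneg (convex_Icc 0 1)
    · exact fun x _ => ((hφD x).continuousAt).continuousWithinAt
    · intro x hx
      exact ((hφD x).differentiableAt).differentiableWithinAt
    · intro x hx
      rw [interior_Icc] at hx
      rw [(hφD x).deriv]
      have hm := hmono uH (uH + x • e)
      have hsub : uH + x • e - uH = x • e := by abel
      rw [hsub, real_inner_smul_right, norm_smul] at hm
      have hA : A (uH + x • e) - A uH = A (uH + x • e) - A uH := rfl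
      rw [inner_sub_left] at hm
      have hx0 : 0 < x := hx.1
      have hnorm : ‖x‖ = x := abs_of_pos hx0
      rw [hnorm] at hm
      have : α * x * ‖e‖ ^ 2 ≤ ⟪A (uH + x • e), e⟫ - ⟪A uH, e⟫ := by
        nlinarith [hm]
      linarith [this, hfe]
  have key : E uH + α / 2 * ‖e‖ ^ 2 ≤ E vH := by
    have h01 : φ 0 ≤ φ 1 := hmonoφ (by norm_num) (by norm_num) (by norm_num)
    have hv : uH + (1 : ℝ) • e = vH := by rw [one_smul, he]; abel
    simp only [hφ, hv] at h01
    simp only [zero_smul, add_zero] at h01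
    nlinarith [h01]
  have hnn : 0 ≤ α / 2 * ‖e‖ ^ 2 := by positivity
  refine ⟨by linarith, ?_, fun h => by rw [h]⟩
  intro hEq
  have : α / 2 * ‖e‖ ^ 2 ≤ 0 := by linarith
  have he0 : ‖e‖ ^ 2 = 0 := by nlinarith
  have : e = 0 := by simpa using he0
  rw [he] at this
  exact sub_eq_zero.mp this
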